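/- arXiv:0805.0209 — 2 statements merged into one kernel-verified Lean document; each statement's English description precedes it below -/
import Mathlib

section
/- Let J be a bicompact closed ideal of a Banach algebra A (L_u R_v is compact on J for all u, v ∈ J). Then for any a, b in the closed linear span of JA, the operator L_a R_b on A is compact. -/
section Defs

variable (B : Type*) [NonUnitalNormedRing B] [NormedSpace ℂ B]
  [SMulCommClass ℂ B B] [IsScalarTower ℂ B B]

/-- A closed two-sided ideal of a (not necessarily unital) complex normed algebra. -/
structure ClosedIdeal where
  carrier : Submodule ℂ B
  isClosed : IsClosed (carrier : Set B)
  mul_mem_left : ∀ (x : B) ⦃a : B⦄, a ∈ carrier → x * a ∈ carrier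
  mul_mem_right : ∀ (x : B) ⦃a : B⦄, a ∈ carrier → a * x ∈ carrier

variable {B}

/-- The two-sided multiplication map `W_b : x ↦ b x b` as a linear map. -/
def Wop (b : B) : B →ₗ[ℂ] B where
  toFun x := b * x * b
  map_add' x y := by simp [mul_add, add_mul]
  map_smul' c x := by simp [mul_smul_comm, smul_mul_assoc]

/-- An element `b` of a Banach algebra is *compact* if `x ↦ b x b` is a compact operator. -/
def IsCompactElement' (b : B) : Prop := IsCompactOperator (Wop b)

end Defs

section Instances

variable {B : Type*} [NonUnitalNormedRing B] [NormedSpace ℂ B]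
  [SMulCommClass ℂ B B] [IsScalarTower ℂ B B]

namespace ClosedIdeal

instance (J : ClosedIdeal B) : Mul J.carrier :=
  ⟨fun x y => ⟨(x : B) * y, J.mul_mem_left x y.2⟩⟩

@[simp] theorem coe_mul (J : ClosedIdeal B) (x y : J.carrier) :
    ((x * y : J.carrier) : B) = (x : B) * y := rfl

instance (J : ClosedIdeal B) : NonUnitalNormedRing J.carrier :=
  { (inferInstance : NormedAddCommGroup J.carrier) with
    mul := (· * ·)
    mul_assoc := fun x y z => Subtype.ext (mul_assoc (x : B) y z)
    left_distrib := fun x y z => Subtype.ext (mul_add (x : B) y z)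
    right_distrib := fun x y z => Subtype.ext (add_mul (x : B) y z)
    zero_mul := fun x => Subtype.ext (zero_mul (x : B))
    mul_zero := fun x => Subtype.ext (mul_zero (x : B))
    norm_mul_le := fun x y => norm_mul_le (x : B) y }

instance (J : ClosedIdeal B) : SMulCommClass ℂ J.carrier J.carrier :=
  ⟨fun c x y => Subtype.ext (mul_smul_comm c (x : B) y).symm⟩

instance (J : ClosedIdeal B) : IsScalarTower ℂ J.carrier J.carrier :=
  ⟨fun c x y => Subtype.ext (smul_mul_assoc c (x : B) y)⟩

instance (J : ClosedIdeal B) [CompleteSpace B] : CompleteSpace J.carrier :=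
  J.isClosed.isComplete.completeSpace_coe

end ClosedIdeal

end Instances

section QuotInstances

variable {B : Type*} [NonUnitalNormedRing B] [NormedSpace ℂ B]
  [SMulCommClass ℂ B B] [IsScalarTower ℂ B B] (J : ClosedIdeal B)

instance : Mul (B ⧸ J.carrier) :=
  ⟨Quotient.map₂ (· * ·) (by
    intro a a' ha b b' hb
    replace ha : a - a' ∈ J.carrier := (Submodule.quotientRel_def _).mp ha
    replace hb : b - b' ∈ J.carrier := (Submodule.quotientRel_def _).mp hb
    refine (Submodule.quotientRel_def _).mpr ?_
    have h : a * b - a' * b' = a * (b - b') + (a - a') * b' := by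
      rw [mul_sub, sub_mul]; abel
    rw [h]
    exact J.carrier.add_mem (J.mul_mem_left a hb) (J.mul_mem_right b' ha))⟩

@[simp] theorem ClosedIdeal.mk_mul (a b : B) :
    (Submodule.Quotient.mk (a * b) : B ⧸ J.carrier) =
      Submodule.Quotient.mk a * Submodule.Quotient.mk b := rfl

end QuotInstances

section QuotRing

variable {B : Type*} [NonUnitalNormedRing B] [NormedSpace ℂ B]
  [SMulCommClass ℂ B B] [IsScalarTower ℂ B B] (J : ClosedIdeal B)

noncomputable instance : NormedAddCommGroup (B ⧸ J.carrier) :=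
  have : IsClosed ((J.carrier : Submodule ℂ B) : Set B) := J.isClosed
  Submodule.Quotient.normedAddCommGroup J.carrier

noncomputable instance : NonUnitalNormedRing (B ⧸ J.carrier) :=
  { (inferInstance : NormedAddCommGroup (B ⧸ J.carrier)) with
    mul := (· * ·)
    mul_assoc := fun q1 q2 q3 => Quotient.inductionOn₃ q1 q2 q3 fun a b c =>
      congrArg Submodule.Quotient.mk (mul_assoc a b c)
    left_distrib := fun q1 q2 q3 => Quotient.inductionOn₃ q1 q2 q3 fun a b c =>
      congrArg Submodule.Quotient.mk (mul_add a b c)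
    right_distrib := fun q1 q2 q3 => Quotient.inductionOn₃ q1 q2 q3 fun a b c =>
      congrArg Submodule.Quotient.mk (add_mul a b c)
    zero_mul := fun q => Quotient.inductionOn q fun a =>
      congrArg Submodule.Quotient.mk (zero_mul a)
    mul_zero := fun q => Quotient.inductionOn q fun a =>
      congrArg Submodule.Quotient.mk (mul_zero a)
    norm_mul_le := fun q1 q2 => by
      have key : ∀ ε : ℝ, 0 < ε → ‖q1 * q2‖ ≤ (‖q1‖ + ε) * (‖q2‖ + ε) := by
        intro ε hε
        obtain ⟨a, rfl, ha⟩ := Submodule.Quotient.norm_mk_lt q1 hε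
        obtain ⟨b, rfl, hb⟩ := Submodule.Quotient.norm_mk_lt q2 hε
        calc ‖(Submodule.Quotient.mk a : B ⧸ J.carrier) * Submodule.Quotient.mk b‖
            = ‖(Submodule.Quotient.mk (a * b) : B ⧸ J.carrier)‖ := by
              rw [ClosedIdeal.mk_mul]
          _ ≤ ‖a * b‖ := Submodule.Quotient.norm_mk_le _ _
          _ ≤ ‖a‖ * ‖b‖ := norm_mul_le a b
          _ ≤ (‖(Submodule.Quotient.mk a : B ⧸ J.carrier)‖ + ε) *
                (‖(Submodule.Quotient.mk b : B ⧸ J.carrier)‖ + ε) := by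
              apply mul_le_mul ha.le hb.le (norm_nonneg b)
              positivity
      have cont : Filter.Tendsto (fun ε : ℝ => (‖q1‖ + ε) * (‖q2‖ + ε))
          (nhdsWithin 0 (Set.Ioi 0)) (nhds (‖q1‖ * ‖q2‖)) := by
        have h0 : Filter.Tendsto (fun ε : ℝ => (‖q1‖ + ε) * (‖q2‖ + ε))
            (nhds 0) (nhds ((‖q1‖ + 0) * (‖q2‖ + 0))) :=
          Continuous.tendsto (by continuity) 0
        simpa using h0.mono_left nhdsWithin_le_nhds
      exact ge_of_tendsto cont
        (Filter.eventually_of_mem self_mem_nhdsWithin fun ε hε => key ε hε) }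

noncomputable instance : SMulCommClass ℂ (B ⧸ J.carrier) (B ⧸ J.carrier) :=
  ⟨fun c q1 q2 => Quotient.inductionOn₂ q1 q2 fun a b =>
    congrArg Submodule.Quotient.mk (mul_smul_comm c a b).symm⟩

noncomputable instance : IsScalarTower ℂ (B ⧸ J.carrier) (B ⧸ J.carrier) :=
  ⟨fun c q1 q2 => Quotient.inductionOn₂ q1 q2 fun a b =>
    congrArg Submodule.Quotient.mk (smul_mul_assoc c a b)⟩

end QuotRing

section Hypo

variable (B : Type*) [NonUnitalNormedRing B] [NormedSpace ℂ B]
  [SMulCommClass ℂ B B] [IsScalarTower ℂ B B]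

/-- A Banach algebra is *hypocompact* if every nonzero quotient by a closed
two-sided ideal contains a nonzero compact element. -/
def IsHypocompact : Prop :=
  ∀ J : ClosedIdeal B, J.carrier ≠ ⊤ →
    ∃ q : B ⧸ J.carrier, q ≠ 0 ∧ IsCompactElement' q

end Hypo

/-- if `J` is a bicompact closed ideal of a Banach algebra `A`,
then `L_a R_b` is compact for all `a, b` in the closed linear span of `J A`. -/
theorem bicompact_span_mul {A : Type*} [NonUnitalNormedRing A] [NormedSpace ℂ A]
    [SMulCommClass ℂ A A] [IsScalarTower ℂ A A] [CompleteSpace A]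
    (J : ClosedIdeal A)
    (hJ : ∀ u ∈ J.carrier, ∀ v ∈ J.carrier, IsCompactOperator (fun x : A => u * x * v)) :
    ∀ a ∈ (Submodule.span ℂ {x | ∃ j ∈ J.carrier, ∃ c : A, x = j * c}).topologicalClosure,
      ∀ b ∈ (Submodule.span ℂ {x | ∃ j ∈ J.carrier, ∃ c : A, x = j * c}).topologicalClosure,
        IsCompactOperator (fun x : A => a * x * b) := by
  classical
  set S : Set A := {x | ∃ j ∈ J.carrier, ∃ c : A, x = j * c} with hS
  -- The operator x ↦ a * x * b as a CLM, jointly continuous in (a, b).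
  set T : A → A → A →L[ℂ] A := fun a b =>
    (((ContinuousLinearMap.mul ℂ A).flip b).comp ((ContinuousLinearMap.mul ℂ A) a)) with hT
  have hTfun : ∀ a b : A, ⇑(T a b) = fun x : A => a * x * b := by
    intro a b; ext x; rfl
  -- compactness for generators
  have hgen : ∀ x ∈ S, ∀ y ∈ S, IsCompactOperator ⇑(T x y) := by
    rintro x ⟨j, hj, c, rfl⟩ y ⟨j', hj', c', rfl⟩
    rw [hTfun]
    have hmid : IsCompactOperator (fun z : A => j * z * j') := hJ j hj j' hj'
    have h1 : IsCompactOperator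
        ((fun z : A => j * z * j') ∘ ((ContinuousLinearMap.mul ℂ A) c)) :=
      hmid.comp_clm _
    have h2 : IsCompactOperator
        (⇑((ContinuousLinearMap.mul ℂ A).flip c') ∘
          ((fun z : A => j * z * j') ∘ ((ContinuousLinearMap.mul ℂ A) c))) :=
      h1.clm_comp _
    convert h2 using 1
    funext z
    show j * c * z * (j' * c') = (j * (c * z) * j') * c'
    simp only [mul_assoc]
  -- compactness is a "submodule-like" condition in each variable
  have hadd : ∀ a a' b : A, IsCompactOperator ⇑(T a b) → IsCompactOperator ⇑(T a' b) →
      IsCompactOperator ⇑(T (a + a') b) := by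
    intro a a' b h h'
    have := h.add h'
    convert this using 1
    · rfl
    funext z
    simp only [hTfun, Pi.add_apply, add_mul]
  have hadd' : ∀ a b b' : A, IsCompactOperator ⇑(T a b) → IsCompactOperator ⇑(T a b') →
      IsCompactOperator ⇑(T a (b + b')) := by
    intro a b b' h h'
    have := h.add h'
    convert this using 1
    · rfl
    funext z
    simp only [hTfun, Pi.add_apply, mul_add]
  have hsmul : ∀ (r : ℂ) (a b : A), IsCompactOperator ⇑(T a b) →
      IsCompactOperator ⇑(T (r • a) b) := by
    intro r a b h
    have := h.smul r
    convert this using 1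
    · rfl
    funext z
    simp only [hTfun, Pi.smul_apply, smul_mul_assoc]
  have hsmul' : ∀ (r : ℂ) (a b : A), IsCompactOperator ⇑(T a b) →
      IsCompactOperator ⇑(T a (r • b)) := by
    intro r a b h
    have := h.smul r
    convert this using 1
    · rfl
    funext z
    simp only [hTfun, Pi.smul_apply, mul_smul_comm]
  have hzero : ∀ b : A, IsCompactOperator ⇑(T 0 b) := by
    intro b
    have : ⇑(T 0 b) = fun _ : A => (0 : A) := by
      funext z; simp [hTfun]
    rw [this]
    exact isCompactOperator_zero
  have hzero' : ∀ a : A, IsCompactOperator ⇑(T a 0) := by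
    intro a
    have : ⇑(T a 0) = fun _ : A => (0 : A) := by
      funext z; simp [hTfun]
    rw [this]
    exact isCompactOperator_zero
  -- extend to the span in both variables
  have hspan : ∀ a ∈ Submodule.span ℂ S, ∀ b ∈ Submodule.span ℂ S,
      IsCompactOperator ⇑(T a b) := by
    intro a ha
    induction ha using Submodule.span_induction with
    | mem x hx =>
      intro b hb
      induction hb using Submodule.span_induction with
      | mem y hy => exact hgen x hx y hy
      | zero => exact hzero' x
      | add y y' _ _ h h' => exact hadd' x y y' h h'
      | smul r y _ h => exact hsmul' r x y h
    | zero => intro b _; exact hzero b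
    | add x x' _ _ h h' => intro b hb; exact hadd x x' b (h b hb) (h' b hb)
    | smul r x _ h => intro b hb; exact hsmul r x b (h b hb)
  -- the set of a (resp. b) for which T a b is compact is closed
  have hcontT : ∀ b : A, Continuous fun a : A => T a b := by
    intro b
    exact (((ContinuousLinearMap.compL ℂ A A A)
      ((ContinuousLinearMap.mul ℂ A).flip b)).comp (ContinuousLinearMap.mul ℂ A)).continuous
  have hcontT' : ∀ a : A, Continuous fun b : A => T a b := by
    intro a
    have : (fun b : A => T a b) =
        ⇑((((ContinuousLinearMap.compL ℂ A A A).flip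
            ((ContinuousLinearMap.mul ℂ A) a)).comp ((ContinuousLinearMap.mul ℂ A).flip)) : A →L[ℂ] A →L[ℂ] A) := by
      funext b; rfl
    rw [this]
    exact ContinuousLinearMap.continuous _
  have hclosed : ∀ b : A, IsClosed {a : A | IsCompactOperator ⇑(T a b)} := by
    intro b
    exact isClosed_setOf_isCompactOperator.preimage (hcontT b)
  have hclosed' : ∀ a : A, IsClosed {b : A | IsCompactOperator ⇑(T a b)} := by
    intro a
    exact isClosed_setOf_isCompactOperator.preimage (hcontT' a)
  -- extend to the closure in b, then in a
  have hstep : ∀ a ∈ Submodule.span ℂ S,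
      ∀ b ∈ (Submodule.span ℂ S).topologicalClosure, IsCompactOperator ⇑(T a b) := by
    intro a ha b hb
    have hb' : b ∈ closure ((Submodule.span ℂ S : Submodule ℂ A) : Set A) := hb
    exact closure_minimal (fun y hy => hspan a ha y hy) (hclosed' a) hb'
  intro a ha b hb
  have ha' : a ∈ closure ((Submodule.span ℂ S : Submodule ℂ A) : Set A) := ha
  have : IsCompactOperator ⇑(T a b) :=
    closure_minimal (fun x hx => hstep x hx b hb) (hclosed b) ha'
  rwa [hTfun] at this
end

section
/- The quotient A/R_hc(A) of a Banach algebra by its largest hypocompact ideal has no nonzero hypocompact ideals and no nonzero compact elements. -/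
section Helpers

variable {B : Type*} [NonUnitalNormedRing B] [NormedSpace ℂ B]
  [SMulCommClass ℂ B B] [IsScalarTower ℂ B B]

/-- The quotient map as a continuous linear map. -/
noncomputable def mkCLM (Jc : ClosedIdeal B) : B →L[ℂ] B ⧸ Jc.carrier :=
  LinearMap.mkContinuous Jc.carrier.mkQ 1 (fun x => by
    simpa using Submodule.Quotient.norm_mk_le Jc.carrier x)

@[simp] theorem mkCLM_apply (Jc : ClosedIdeal B) (x : B) :
    mkCLM Jc x = Submodule.Quotient.mk x := rfl

/-- Lifting a continuous linear map to the quotient. -/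
noncomputable def quotLiftCLM (Jc : ClosedIdeal B) {F : Type*} [SeminormedAddCommGroup F]
    [NormedSpace ℂ F] (f : B →L[ℂ] F) (hker : ∀ x ∈ Jc.carrier, f x = 0) :
    (B ⧸ Jc.carrier) →L[ℂ] F :=
  LinearMap.mkContinuous
    (Jc.carrier.liftQ (f : B →ₗ[ℂ] F) (fun x hx => by simpa using hker x hx))
    ‖f‖ (fun q => by
      refine le_of_forall_pos_le_add (fun ε hε => ?_)
      have hε' : (0:ℝ) < ε / (‖f‖ + 1) := by positivity
      obtain ⟨x, hx, hnorm⟩ := Submodule.Quotient.norm_mk_lt q hε'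
      have h1 : (Jc.carrier.liftQ (f : B →ₗ[ℂ] F)
          (fun x hx => by simpa using hker x hx)) q = f x := by
        rw [← hx, Submodule.liftQ_apply]; rfl
      rw [h1]
      calc ‖f x‖ ≤ ‖f‖ * ‖x‖ := f.le_opNorm x
        _ ≤ ‖f‖ * (‖q‖ + ε / (‖f‖ + 1)) :=
            mul_le_mul_of_nonneg_left hnorm.le (norm_nonneg f)
        _ = ‖f‖ * ‖q‖ + ‖f‖ * (ε / (‖f‖ + 1)) := by ring
        _ ≤ ‖f‖ * ‖q‖ + ε := by
            have h2 : ‖f‖ * (ε / (‖f‖ + 1)) ≤ ε := by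
              rw [mul_div_assoc']
              rw [div_le_iff₀ (by positivity : (0:ℝ) < ‖f‖ + 1)]
              nlinarith [norm_nonneg f, hε.le]
            linarith)

@[simp] theorem quotLiftCLM_mk (Jc : ClosedIdeal B) {F : Type*} [SeminormedAddCommGroup F]
    [NormedSpace ℂ F] (f : B →L[ℂ] F) (hker : ∀ x ∈ Jc.carrier, f x = 0) (x : B) :
    quotLiftCLM Jc f hker (Submodule.Quotient.mk x) = f x := by
  show (Jc.carrier.liftQ (f : B →ₗ[ℂ] F) _) (Submodule.Quotient.mk x) = f x
  rw [Submodule.liftQ_apply]; rfl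

/-- Core lemma: if the two-sided multiplication by `g` on the quotient `Ic ⧸ Lc` factors
through a compact operator, then the class of `g` is a compact element. -/
theorem isCompactElement_mk_of_factor [CompleteSpace B]
    (Ic : ClosedIdeal B) (Lc : ClosedIdeal Ic.carrier) (g : Ic.carrier)
    {E : Type*} [TopologicalSpace E]
    {T : Ic.carrier → E} (hT : IsCompactOperator T)
    {S : E → Ic.carrier ⧸ Lc.carrier} (hS : Continuous S)
    (hid : ∀ y : Ic.carrier,
      (Submodule.Quotient.mk (g * y * g) : Ic.carrier ⧸ Lc.carrier) = S (T y)) :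
    IsCompactElement' (Submodule.Quotient.mk g : Ic.carrier ⧸ Lc.carrier) := by
  obtain ⟨K, hK, hKmem⟩ := hT.continuous_comp hS
  obtain ⟨ρ, hρ, hball⟩ := Metric.mem_nhds_iff.mp hKmem
  refine ⟨K, hK, ?_⟩
  refine Filter.mem_of_superset (Metric.ball_mem_nhds 0 (by positivity : (0:ℝ) < ρ/2)) ?_
  intro yq hyq
  obtain ⟨y, hy, hynorm⟩ := Submodule.Quotient.norm_mk_lt yq (by positivity : (0:ℝ) < ρ/2)
  have hyqn : ‖yq‖ < ρ/2 := by simpa [dist_zero_right] using hyq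
  have hyball : y ∈ Metric.ball (0 : Ic.carrier) ρ := by
    rw [Metric.mem_ball, dist_zero_right]; linarith
  have hmem : (S ∘ T) y ∈ K := hball hyball
  have hW : Wop (Submodule.Quotient.mk g : Ic.carrier ⧸ Lc.carrier) yq = S (T y) := by
    rw [← hy]
    show Submodule.Quotient.mk g * Submodule.Quotient.mk y * Submodule.Quotient.mk g = S (T y)
    rw [← ClosedIdeal.mk_mul, ← ClosedIdeal.mk_mul]
    exact hid y
  simpa [Set.mem_preimage, hW] using hmem

end Helpers
section Sandwich

variable {B : Type*} [NonUnitalNormedRing B] [NormedSpace ℂ B]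
  [SMulCommClass ℂ B B] [IsScalarTower ℂ B B]

/-- If `g ∈ Ic` satisfies `g y g = F (q (G y) q)` for a compact element `q ∈ Ic` of the
ambient algebra and continuous linear maps `F`, `G` with `F` mapping `Ic` to itself, then
the class of `g` in any quotient of `Ic` is a compact element. -/
theorem isCompactElement_mk_of_sandwich [CompleteSpace B]
    (Ic : ClosedIdeal B) (Lc : ClosedIdeal Ic.carrier) {q : B} (hq : IsCompactElement' q)
    (hqI : q ∈ Ic.carrier) (g : Ic.carrier)
    (F G : B →L[ℂ] B) (hF : ∀ w ∈ Ic.carrier, F w ∈ Ic.carrier)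
    (hid : ∀ y : Ic.carrier, ((g * y * g : Ic.carrier) : B) = F (q * G (y : B) * q)) :
    IsCompactElement' (Submodule.Quotient.mk g : Ic.carrier ⧸ Lc.carrier) := by
  have hmem : ∀ w : B, q * w * q ∈ Ic.carrier := fun w =>
    Ic.mul_mem_right q (Ic.mul_mem_right w hqI)
  have hT1 : IsCompactOperator (fun y : Ic.carrier => q * G (y : B) * q) := by
    have h := (hq : IsCompactOperator (Wop q)).comp_clm (G.comp Ic.carrier.subtypeL)
    exact h
  have hT2 : IsCompactOperator (fun y : Ic.carrier => F (q * G (y : B) * q)) :=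
    hT1.continuous_comp F.continuous
  have hT : IsCompactOperator
      (fun y : Ic.carrier => (⟨F (q * G (y : B) * q), hF _ (hmem _)⟩ : Ic.carrier)) :=
    hT2.codRestrict (fun y => hF _ (hmem _)) Ic.isClosed
  refine isCompactElement_mk_of_factor Ic Lc g hT
    ((mkCLM Lc).continuous : Continuous
      (fun w : Ic.carrier => (Submodule.Quotient.mk w : Ic.carrier ⧸ Lc.carrier))) ?_
  intro y
  exact congrArg Submodule.Quotient.mk (Subtype.ext (hid y))

end Sandwich
section Part1

variable {A : Type*} [NonUnitalNormedRing A] [NormedSpace ℂ A]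
  [SMulCommClass ℂ A A] [IsScalarTower ℂ A A]

/-- The preimage in `A` of a closed ideal of `A ⧸ R`. -/
noncomputable def preimageIdeal (R : ClosedIdeal A) (I : ClosedIdeal (A ⧸ R.carrier)) :
    ClosedIdeal A where
  carrier := I.carrier.comap R.carrier.mkQ
  isClosed := I.isClosed.preimage (mkCLM R).continuous
  mul_mem_left := fun x a ha => by
    show R.carrier.mkQ (x * a) ∈ I.carrier
    have h : R.carrier.mkQ (x * a) = R.carrier.mkQ x * R.carrier.mkQ a :=
      ClosedIdeal.mk_mul R x a
    rw [h]; exact I.mul_mem_left _ ha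
  mul_mem_right := fun x a ha => by
    show R.carrier.mkQ (a * x) ∈ I.carrier
    have h : R.carrier.mkQ (a * x) = R.carrier.mkQ a * R.carrier.mkQ x :=
      ClosedIdeal.mk_mul R a x
    rw [h]; exact I.mul_mem_right _ ha

theorem mem_preimageIdeal_of_mem (R : ClosedIdeal A) (I : ClosedIdeal (A ⧸ R.carrier))
    {r : A} (hr : r ∈ R.carrier) : r ∈ (preimageIdeal R I).carrier := by
  show Submodule.Quotient.mk r ∈ I.carrier
  rw [(Submodule.Quotient.mk_eq_zero R.carrier).mpr hr]
  exact I.carrier.zero_mem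

theorem mem_preimageIdeal_iff (R : ClosedIdeal A) (I : ClosedIdeal (A ⧸ R.carrier)) {a : A} :
    a ∈ (preimageIdeal R I).carrier
      ↔ (Submodule.Quotient.mk a : A ⧸ R.carrier) ∈ I.carrier := Iff.rfl

attribute [irreducible] preimageIdeal

/-- Case where some element of the inner hypocompact ideal `Rc` avoids `L`. -/
theorem exists_compact_of_inner [CompleteSpace A] (Rc Jc : ClosedIdeal A)
    (hRJ : ∀ r ∈ Rc.carrier, r ∈ Jc.carrier)
    (hRhyp : IsHypocompact Rc.carrier)
    (L : ClosedIdeal Jc.carrier)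
    (s : A) (hsR : s ∈ Rc.carrier) (hsL : (⟨s, hRJ s hsR⟩ : Jc.carrier) ∉ L.carrier) :
    ∃ qq : Jc.carrier ⧸ L.carrier, qq ≠ 0 ∧ IsCompactElement' qq := by
  classical
  let ιlin : Rc.carrier →ₗ[ℂ] Jc.carrier :=
    { toFun := fun t => ⟨(t : A), hRJ t t.2⟩
      map_add' := fun _ _ => Subtype.ext rfl
      map_smul' := fun _ _ => Subtype.ext rfl }
  have hιmul : ∀ t u : Rc.carrier, ιlin (t * u) = ιlin t * ιlin u := fun _ _ => Subtype.ext rfl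
  have hιcont : Continuous ιlin := AddMonoidHomClass.continuous_of_bound ιlin 1 (fun t => by
    rw [one_mul]; exact le_of_eq rfl)
  obtain ⟨M, hMcar⟩ : ∃ M : ClosedIdeal Rc.carrier, M.carrier = L.carrier.comap ιlin := by
    refine ⟨{ carrier := L.carrier.comap ιlin
              isClosed := L.isClosed.preimage hιcont
              mul_mem_left := fun x a ha => by
                show ιlin (x * a) ∈ L.carrier
                rw [hιmul]; exact L.mul_mem_left _ ha
              mul_mem_right := fun x a ha => by
                show ιlin (a * x) ∈ L.carrier
                rw [hιmul]; exact L.mul_mem_right _ ha }, rfl⟩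
  have hMmem : ∀ t : Rc.carrier, t ∈ M.carrier ↔ ιlin t ∈ L.carrier := fun t => by
    rw [hMcar]; exact Submodule.mem_comap
  have hM : M.carrier ≠ ⊤ := by
    intro htop
    have hm : (⟨s, hsR⟩ : Rc.carrier) ∈ M.carrier := by rw [htop]; trivial
    exact hsL ((hMmem _).mp hm)
  obtain ⟨zb, hzb0, hzbc⟩ := hRhyp M hM
  obtain ⟨z, hz⟩ := Submodule.Quotient.mk_surjective M.carrier zb
  have hzL : ιlin z ∉ L.carrier := by
    intro h
    exact hzb0 (by rw [← hz]; exact (Submodule.Quotient.mk_eq_zero M.carrier).mpr ((hMmem z).mpr h))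
  by_cases hall : ∀ x : Jc.carrier, ιlin z * x * ιlin z ∈ L.carrier
  · refine ⟨Submodule.Quotient.mk (ιlin z), ?_, ?_⟩
    · intro h0; exact hzL ((Submodule.Quotient.mk_eq_zero L.carrier).mp h0)
    · refine isCompactElement_mk_of_factor Jc L (ιlin z)
        (isCompactOperator_zero :
          IsCompactOperator (0 : Jc.carrier → Jc.carrier ⧸ L.carrier))
        continuous_id ?_
      intro y
      show Submodule.Quotient.mk (ιlin z * y * ιlin z)
        = id ((0 : Jc.carrier → Jc.carrier ⧸ L.carrier) y)
      simpa using (Submodule.Quotient.mk_eq_zero L.carrier).mpr (hall y)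
  · push_neg at hall
    obtain ⟨x₀, hx₀⟩ := hall
    have hmemψ : ∀ y : Jc.carrier,
        (x₀ : A) * (z : A) * (y : A) * (z : A) * (x₀ : A) ∈ Rc.carrier := fun y =>
      Rc.mul_mem_right _ (Rc.mul_mem_right _ (Rc.mul_mem_right _
        (Rc.mul_mem_left (x₀ : A) z.2)))
    let ψlin : Jc.carrier →ₗ[ℂ] Rc.carrier :=
      { toFun := fun y => ⟨(x₀ : A) * (z : A) * (y : A) * (z : A) * (x₀ : A), hmemψ y⟩
        map_add' := fun a b => Subtype.ext (by
          show (x₀ : A) * (z : A) * ((a + b : Jc.carrier) : A) * (z : A) * (x₀ : A) = _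
          simp [mul_add, add_mul])
        map_smul' := fun c a => Subtype.ext (by
          show (x₀ : A) * (z : A) * ((c • a : Jc.carrier) : A) * (z : A) * (x₀ : A) = _
          simp [mul_smul_comm, smul_mul_assoc]) }
    have hψcont : Continuous ψlin :=
      AddMonoidHomClass.continuous_of_bound ψlin (‖(x₀:A)‖ * ‖(z:A)‖ * ‖(z:A)‖ * ‖(x₀:A)‖) (fun y => by
        show ‖(x₀:A) * (z:A) * (y:A) * (z:A) * (x₀:A)‖ ≤ _
        have hy : ‖(y : A)‖ = ‖y‖ := rfl
        calc ‖(x₀:A) * (z:A) * (y:A) * (z:A) * (x₀:A)‖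
            ≤ ‖(x₀:A) * (z:A) * (y:A) * (z:A)‖ * ‖(x₀:A)‖ := norm_mul_le _ _
          _ ≤ ‖(x₀:A) * (z:A) * (y:A)‖ * ‖(z:A)‖ * ‖(x₀:A)‖ := by
              gcongr; exact norm_mul_le _ _
          _ ≤ ‖(x₀:A) * (z:A)‖ * ‖(y:A)‖ * ‖(z:A)‖ * ‖(x₀:A)‖ := by
              gcongr; exact norm_mul_le _ _
          _ ≤ ‖(x₀:A)‖ * ‖(z:A)‖ * ‖(y:A)‖ * ‖(z:A)‖ * ‖(x₀:A)‖ := by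
              gcongr; exact norm_mul_le _ _
          _ = ‖(x₀:A)‖ * ‖(z:A)‖ * ‖(z:A)‖ * ‖(x₀:A)‖ * ‖y‖ := by rw [← hy]; ring)
    let ψ : Jc.carrier →L[ℂ] Rc.carrier := ⟨ψlin, hψcont⟩
    let ι : Rc.carrier →L[ℂ] Jc.carrier := ⟨ιlin, hιcont⟩
    let S : (Rc.carrier ⧸ M.carrier) →L[ℂ] (Jc.carrier ⧸ L.carrier) :=
      quotLiftCLM M ((mkCLM L).comp ι) (fun t ht => by
        show Submodule.Quotient.mk (ιlin t) = 0
        exact (Submodule.Quotient.mk_eq_zero L.carrier).mpr ((hMmem t).mp ht))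
    have hTc : IsCompactOperator (fun y : Jc.carrier =>
        Wop zb ((Submodule.Quotient.mk (ψlin y)) : Rc.carrier ⧸ M.carrier)) := by
      have h := (hzbc : IsCompactOperator (Wop zb)).comp_clm ((mkCLM M).comp ψ)
      exact h
    refine ⟨Submodule.Quotient.mk (ιlin z * x₀ * ιlin z), ?_, ?_⟩
    · intro h0; exact hx₀ ((Submodule.Quotient.mk_eq_zero L.carrier).mp h0)
    · refine isCompactElement_mk_of_factor Jc L (ιlin z * x₀ * ιlin z) hTc S.continuous ?_
      intro y
      have h1 : Wop zb (Submodule.Quotient.mk (ψlin y) : Rc.carrier ⧸ M.carrier)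
          = Submodule.Quotient.mk (z * ψlin y * z) := by
        rw [← hz]
        show (Submodule.Quotient.mk z : Rc.carrier ⧸ M.carrier)
            * Submodule.Quotient.mk (ψlin y) * Submodule.Quotient.mk z = _
        rw [← ClosedIdeal.mk_mul, ← ClosedIdeal.mk_mul]
      rw [h1]
      have h2 : S (Submodule.Quotient.mk (z * ψlin y * z))
          = Submodule.Quotient.mk (ιlin (z * ψlin y * z)) :=
        quotLiftCLM_mk M ((mkCLM L).comp ι) _ (z * ψlin y * z)
      rw [h2]
      congr 1
      apply Subtype.ext
      show (z:A) * (x₀:A) * (z:A) * (y:A) * ((z:A) * (x₀:A) * (z:A))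
          = (z:A) * ((x₀:A) * (z:A) * (y:A) * (z:A) * (x₀:A)) * (z:A)
      simp only [mul_assoc]

end Part1
section Part1b

variable {A : Type*} [NonUnitalNormedRing A] [NormedSpace ℂ A]
  [SMulCommClass ℂ A A] [IsScalarTower ℂ A A]

set_option maxHeartbeats 1000000 in
/-- Case where the inner ideal `R` is contained in `L`: use hypocompactness of `I`. -/
theorem exists_compact_of_outer [CompleteSpace A] (R : ClosedIdeal A)
    (I : ClosedIdeal (A ⧸ R.carrier)) (hI : IsHypocompact I.carrier)
    (L : ClosedIdeal (preimageIdeal R I).carrier) (hL : L.carrier ≠ ⊤)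
    (hcase : ∀ r (hr : r ∈ R.carrier),
      (⟨r, mem_preimageIdeal_of_mem R I hr⟩ : (preimageIdeal R I).carrier) ∈ L.carrier) :
    ∃ qq : (preimageIdeal R I).carrier ⧸ L.carrier, qq ≠ 0 ∧ IsCompactElement' qq := by
  classical
  let θlin : (preimageIdeal R I).carrier →ₗ[ℂ] I.carrier :=
    { toFun := fun x => ⟨Submodule.Quotient.mk (x : A), (mem_preimageIdeal_iff R I).mp x.2⟩
      map_add' := fun a b => Subtype.ext (by
        show Submodule.Quotient.mk ((a + b : (preimageIdeal R I).carrier) : A) = _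
        simp)
      map_smul' := fun c a => Subtype.ext (by
        show Submodule.Quotient.mk ((c • a : (preimageIdeal R I).carrier) : A) = _
        simp) }
  have hθcont : Continuous θlin := AddMonoidHomClass.continuous_of_bound θlin 1 (fun x => by
    rw [one_mul]
    exact Submodule.Quotient.norm_mk_le _ _)
  let θ : (preimageIdeal R I).carrier →L[ℂ] I.carrier := ⟨θlin, hθcont⟩
  have hθs : Function.Surjective θlin := by
    rintro ⟨v, hv⟩
    obtain ⟨a, ha⟩ := Submodule.Quotient.mk_surjective R.carrier v
    exact ⟨⟨a, (mem_preimageIdeal_iff R I).mpr (by rw [ha]; exact hv)⟩,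
      Subtype.ext ha⟩
  have hθmul : ∀ x y, θlin (x * y) = θlin x * θlin y := fun x y => Subtype.ext (by
    show Submodule.Quotient.mk ((x * y : (preimageIdeal R I).carrier) : A)
      = Submodule.Quotient.mk (x : A) * Submodule.Quotient.mk (y : A)
    rw [ClosedIdeal.coe_mul]
    exact ClosedIdeal.mk_mul R _ _)
  have hsat : ∀ x : (preimageIdeal R I).carrier,
      θlin x ∈ L.carrier.map θlin → x ∈ L.carrier := by
    intro x hx
    obtain ⟨l, hl, hlx⟩ := hx
    have hmem : ((x - l : (preimageIdeal R I).carrier) : A) ∈ R.carrier := by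
      have hval : (Submodule.Quotient.mk ((l : A)) : A ⧸ R.carrier)
          = Submodule.Quotient.mk ((x : A)) := congrArg Subtype.val hlx
      have h0 : (Submodule.Quotient.mk ((x - l : (preimageIdeal R I).carrier) : A)
          : A ⧸ R.carrier) = 0 := by
        have hc : ((x - l : (preimageIdeal R I).carrier) : A) = (x : A) - (l : A) := rfl
        rw [hc, Submodule.Quotient.mk_sub, hval, sub_self]
      exact (Submodule.Quotient.mk_eq_zero R.carrier).mp h0
    have hL2 := hcase _ hmem
    have heq : (⟨((x - l : (preimageIdeal R I).carrier) : A),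
        mem_preimageIdeal_of_mem R I hmem⟩ : (preimageIdeal R I).carrier) = x - l :=
      Subtype.ext rfl
    rw [heq] at hL2
    have hfin := L.carrier.add_mem hL2 hl
    simpa using hfin
  obtain ⟨L', hL'car⟩ : ∃ L' : ClosedIdeal I.carrier, L'.carrier = L.carrier.map θlin := by
    refine ⟨{ carrier := L.carrier.map θlin
              isClosed := by
                have hopen : IsOpenMap θ := θ.isOpenMap hθs
                have hcompl : ((L.carrier.map θlin : Submodule ℂ I.carrier)
                    : Set I.carrier)ᶜ = θlin '' ((L.carrier : Set _)ᶜ) := by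
                  ext v
                  simp only [Set.mem_compl_iff, Set.mem_image, SetLike.mem_coe]
                  constructor
                  · intro hv
                    obtain ⟨x, hx⟩ := hθs v
                    exact ⟨x, fun hxL => hv (hx ▸ Submodule.mem_map_of_mem hxL), hx⟩
                  · rintro ⟨x, hxL, rfl⟩ hmem
                    exact hxL (hsat x hmem)
                rw [← isOpen_compl_iff, hcompl]
                exact hopen _ L.isClosed.isOpen_compl
              mul_mem_left := fun u a ha => by
                obtain ⟨x, hx⟩ := hθs u
                obtain ⟨l, hl, rfl⟩ := ha
                exact ⟨x * l, L.mul_mem_left x hl, by rw [hθmul, hx]⟩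
              mul_mem_right := fun u a ha => by
                obtain ⟨x, hx⟩ := hθs u
                obtain ⟨l, hl, rfl⟩ := ha
                exact ⟨l * x, L.mul_mem_right x hl, by rw [hθmul, hx]⟩ }, rfl⟩
  have hL' : L'.carrier ≠ ⊤ := by
    intro htop
    apply hL
    rw [Submodule.eq_top_iff']
    intro x
    have hmem : θlin x ∈ L.carrier.map θlin := by
      rw [← hL'car, htop]; trivial
    exact hsat x hmem
  obtain ⟨qt, hqt0, hqtc⟩ := hI L' hL'
  let Θ : ((preimageIdeal R I).carrier ⧸ L.carrier) →L[ℂ] (I.carrier ⧸ L'.carrier) :=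
    quotLiftCLM L ((mkCLM L').comp θ) (fun x hx => by
      show Submodule.Quotient.mk (θlin x) = 0
      exact (Submodule.Quotient.mk_eq_zero _).mpr
        (hL'car ▸ Submodule.mem_map_of_mem hx))
  have hΘmk : ∀ x, Θ (Submodule.Quotient.mk x) = Submodule.Quotient.mk (θlin x) :=
    fun x => quotLiftCLM_mk L ((mkCLM L').comp θ) _ x
  have hΘinj : Function.Injective Θ := by
    intro u v huv
    obtain ⟨x, rfl⟩ := Submodule.Quotient.mk_surjective _ u
    obtain ⟨y, rfl⟩ := Submodule.Quotient.mk_surjective _ v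
    rw [hΘmk, hΘmk] at huv
    have hsub : θlin x - θlin y ∈ L'.carrier := (Submodule.Quotient.eq _).mp huv
    rw [← map_sub, hL'car] at hsub
    have hxy := hsat (x - y) hsub
    exact (Submodule.Quotient.eq _).mpr hxy
  have hΘsur : Function.Surjective Θ := by
    intro w
    obtain ⟨v, rfl⟩ := Submodule.Quotient.mk_surjective _ w
    obtain ⟨x, rfl⟩ := hθs v
    exact ⟨Submodule.Quotient.mk x, hΘmk x⟩
  let e := ContinuousLinearEquiv.ofBijective Θ
    (LinearMap.ker_eq_bot.mpr hΘinj) (LinearMap.range_eq_top.mpr hΘsur)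
  have he : (⇑e : _ → _) = ⇑Θ := ContinuousLinearEquiv.coeFn_ofBijective _ _ _
  have hemul : ∀ u v, Θ (u * v) = Θ u * Θ v := by
    intro u v
    obtain ⟨x, rfl⟩ := Submodule.Quotient.mk_surjective _ u
    obtain ⟨y, rfl⟩ := Submodule.Quotient.mk_surjective _ v
    rw [← ClosedIdeal.mk_mul, hΘmk, hΘmk, hΘmk, hθmul, ClosedIdeal.mk_mul]
  obtain ⟨g, hg⟩ := Submodule.Quotient.mk_surjective L.carrier (e.symm qt)
  refine ⟨Submodule.Quotient.mk g, ?_, ?_⟩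
  · intro h0
    apply hqt0
    have h1 : e.symm qt = 0 := by rw [← hg, h0]
    have h2 := congrArg e h1
    rwa [e.apply_symm_apply, map_zero] at h2
  · have hTc : IsCompactOperator (fun y : (preimageIdeal R I).carrier =>
        Wop qt (Θ (Submodule.Quotient.mk y))) := by
      have h := (hqtc : IsCompactOperator (Wop qt)).comp_clm (Θ.comp (mkCLM L))
      exact h
    refine isCompactElement_mk_of_factor _ L g hTc e.symm.continuous ?_
    intro y
    apply e.injective
    rw [e.apply_symm_apply]
    have hgq : Θ (Submodule.Quotient.mk g) = qt := by
      calc Θ (Submodule.Quotient.mk g) = e (Submodule.Quotient.mk g) :=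
            (congrFun he _).symm
        _ = e (e.symm qt) := by rw [hg]
        _ = qt := e.apply_symm_apply qt
    calc e (Submodule.Quotient.mk (g * y * g))
        = Θ (Submodule.Quotient.mk g * Submodule.Quotient.mk y
            * Submodule.Quotient.mk g) := by
          rw [he, ← ClosedIdeal.mk_mul, ← ClosedIdeal.mk_mul]
      _ = Θ (Submodule.Quotient.mk g) * Θ (Submodule.Quotient.mk y)
            * Θ (Submodule.Quotient.mk g) := by rw [hemul, hemul]
      _ = qt * Θ (Submodule.Quotient.mk y) * qt := by rw [hgq]
      _ = Wop qt (Θ (Submodule.Quotient.mk y)) := rfl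

end Part1b
section Part1c

variable {A : Type*} [NonUnitalNormedRing A] [NormedSpace ℂ A]
  [SMulCommClass ℂ A A] [IsScalarTower ℂ A A]

theorem hypocompact_ideal_eq_bot [CompleteSpace A] (R : ClosedIdeal A)
    (hR1 : IsHypocompact R.carrier)
    (hR2 : ∀ I : ClosedIdeal A, IsHypocompact I.carrier → I.carrier ≤ R.carrier)
    (I : ClosedIdeal (A ⧸ R.carrier)) (hI : IsHypocompact I.carrier) :
    I.carrier = ⊥ := by
  have hyp : IsHypocompact (preimageIdeal R I).carrier := by
    intro L hL
    by_cases hcase : ∀ r (hr : r ∈ R.carrier),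
        (⟨r, mem_preimageIdeal_of_mem R I hr⟩ : (preimageIdeal R I).carrier) ∈ L.carrier
    · exact exists_compact_of_outer R I hI L hL hcase
    · push_neg at hcase
      obtain ⟨s, hsR, hsL⟩ := hcase
      exact exists_compact_of_inner R (preimageIdeal R I)
        (fun r hr => mem_preimageIdeal_of_mem R I hr) hR1 L s hsR hsL
  have hle := hR2 (preimageIdeal R I) hyp
  rw [eq_bot_iff]
  intro v hv
  obtain ⟨a, ha⟩ := Submodule.Quotient.mk_surjective R.carrier v
  have haJ : a ∈ (preimageIdeal R I).carrier :=
    (mem_preimageIdeal_iff R I).mpr (by rw [ha]; exact hv)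
  have haR : a ∈ R.carrier := hle haJ
  have hv0 : v = 0 := by rw [← ha]; exact (Submodule.Quotient.mk_eq_zero R.carrier).mpr haR
  simp [hv0]

end Part1c
section Part2

variable {B : Type*} [NonUnitalNormedRing B] [NormedSpace ℂ B]
  [SMulCommClass ℂ B B] [IsScalarTower ℂ B B]

set_option maxHeartbeats 1000000 in
/-- If every hypocompact closed ideal of a Banach algebra is trivial, then
every compact element is zero. -/
theorem compact_eq_zero_of_no_hypocompact [CompleteSpace B]
    (hbot : ∀ I : ClosedIdeal B, IsHypocompact I.carrier → I.carrier = ⊥)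
    (q : B) (hq : IsCompactElement' q) : q = 0 := by
  classical
  set Sset : Set B :=
    {w | w = q ∨ (∃ x, x * q = w) ∨ (∃ x, q * x = w) ∨ (∃ x y, x * q * y = w)} with hSset
  set N : Submodule ℂ B := Submodule.span ℂ Sset with hN
  have hSl : ∀ x : B, ∀ u ∈ Sset, x * u ∈ Sset := by
    intro x u hu
    rcases hu with rfl | ⟨a, ha⟩ | ⟨a, ha⟩ | ⟨a, b, hab⟩
    · exact Or.inr (Or.inl ⟨x, rfl⟩)
    · exact Or.inr (Or.inl ⟨x * a, by rw [← ha, mul_assoc]⟩)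
    · exact Or.inr (Or.inr (Or.inr ⟨x, a, by rw [← ha, mul_assoc]⟩))
    · exact Or.inr (Or.inr (Or.inr ⟨x * a, b, by rw [← hab]; simp [mul_assoc]⟩))
  have hSr : ∀ x : B, ∀ u ∈ Sset, u * x ∈ Sset := by
    intro x u hu
    rcases hu with rfl | ⟨a, ha⟩ | ⟨a, ha⟩ | ⟨a, b, hab⟩
    · exact Or.inr (Or.inr (Or.inl ⟨x, rfl⟩))
    · exact Or.inr (Or.inr (Or.inr ⟨a, x, by rw [← ha]⟩))
    · exact Or.inr (Or.inr (Or.inl ⟨a * x, by rw [← ha, mul_assoc]⟩))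
    · exact Or.inr (Or.inr (Or.inr ⟨a, b * x, by rw [← hab]; simp [mul_assoc]⟩))
  have hNl : ∀ x : B, ∀ w ∈ N, x * w ∈ N := by
    intro x
    have hmap : N.map (LinearMap.mulLeft ℂ x) ≤ N := by
      rw [hN, Submodule.map_span]
      apply Submodule.span_le.mpr
      rintro _ ⟨u, hu, rfl⟩
      exact Submodule.subset_span (hSl x u hu)
    intro w hw
    exact hmap (Submodule.mem_map_of_mem hw)
  have hNr : ∀ x : B, ∀ w ∈ N, w * x ∈ N := by
    intro x
    have hmap : N.map (LinearMap.mulRight ℂ x) ≤ N := by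
      rw [hN, Submodule.map_span]
      apply Submodule.span_le.mpr
      rintro _ ⟨u, hu, rfl⟩
      exact Submodule.subset_span (hSr x u hu)
    intro w hw
    exact hmap (Submodule.mem_map_of_mem hw)
  obtain ⟨Ic, hIcar⟩ : ∃ Ic : ClosedIdeal B, Ic.carrier = N.topologicalClosure := by
    refine ⟨{ carrier := N.topologicalClosure
              isClosed := N.isClosed_topologicalClosure
              mul_mem_left := fun x a ha => ?_
              mul_mem_right := fun x a ha => ?_ }, rfl⟩
    · have ha' : a ∈ closure (N : Set B) := by
        rw [← Submodule.topologicalClosure_coe]; exact ha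
      have h2 := map_mem_closure (continuous_const.mul continuous_id) ha'
        (fun w hw => hNl x w hw)
      rw [← SetLike.mem_coe, Submodule.topologicalClosure_coe]
      exact h2
    · have ha' : a ∈ closure (N : Set B) := by
        rw [← Submodule.topologicalClosure_coe]; exact ha
      have h2 := map_mem_closure (continuous_id.mul continuous_const) ha'
        (fun w hw => hNr x w hw)
      rw [← SetLike.mem_coe, Submodule.topologicalClosure_coe]
      exact h2
  have hqS : q ∈ Sset := Or.inl rfl
  have hqI : q ∈ Ic.carrier := by
    rw [hIcar]; exact N.le_topologicalClosure (Submodule.subset_span hqS)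
  have hyp : IsHypocompact Ic.carrier := by
    intro L hL
    by_cases hex : ∃ g : Ic.carrier, (g : B) ∈ Sset ∧ g ∉ L.carrier
    · obtain ⟨g, hgS, hgL⟩ := hex
      refine ⟨Submodule.Quotient.mk g,
        fun h0 => hgL ((Submodule.Quotient.mk_eq_zero _).mp h0), ?_⟩
      rcases hgS with hgq | ⟨x, hx⟩ | ⟨x, hx⟩ | ⟨x, y, hxy⟩
      · refine isCompactElement_mk_of_sandwich Ic L hq hqI g
          (ContinuousLinearMap.id ℂ B) (ContinuousLinearMap.id ℂ B)
          (fun w hw => hw) ?_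
        intro c
        show ((g * c * g : Ic.carrier) : B) = q * (c : B) * q
        rw [ClosedIdeal.coe_mul, ClosedIdeal.coe_mul, hgq]
      · refine isCompactElement_mk_of_sandwich Ic L hq hqI g
          (ContinuousLinearMap.mul ℂ B x) ((ContinuousLinearMap.mul ℂ B).flip x)
          (fun w hw => Ic.mul_mem_left x hw) ?_
        intro c
        show ((g * c * g : Ic.carrier) : B) = x * (q * ((c : B) * x) * q)
        rw [ClosedIdeal.coe_mul, ClosedIdeal.coe_mul, ← hx]
        simp only [mul_assoc]
      · refine isCompactElement_mk_of_sandwich Ic L hq hqI g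
          ((ContinuousLinearMap.mul ℂ B).flip x) (ContinuousLinearMap.mul ℂ B x)
          (fun w hw => Ic.mul_mem_right x hw) ?_
        intro c
        show ((g * c * g : Ic.carrier) : B) = (q * (x * (c : B)) * q) * x
        rw [ClosedIdeal.coe_mul, ClosedIdeal.coe_mul, ← hx]
        simp only [mul_assoc]
      · refine isCompactElement_mk_of_sandwich Ic L hq hqI g
          ((ContinuousLinearMap.mul ℂ B x).comp ((ContinuousLinearMap.mul ℂ B).flip y))
          ((ContinuousLinearMap.mul ℂ B y).comp ((ContinuousLinearMap.mul ℂ B).flip x))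
          (fun w hw => Ic.mul_mem_left x (Ic.mul_mem_right y hw)) ?_
        intro c
        show ((g * c * g : Ic.carrier) : B) = x * ((q * (y * ((c : B) * x)) * q) * y)
        rw [ClosedIdeal.coe_mul, ClosedIdeal.coe_mul, ← hxy]
        simp only [mul_assoc]
    · exfalso
      apply hL
      push_neg at hex
      have hsub : (N : Set B) ⊆ ((L.carrier.map Ic.carrier.subtype : Submodule ℂ B) : Set B) := by
        have hle : N ≤ L.carrier.map Ic.carrier.subtype := by
          rw [hN]
          apply Submodule.span_le.mpr
          intro u hu
          have huI : u ∈ Ic.carrier := by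
            rw [hIcar]; exact N.le_topologicalClosure (Submodule.subset_span hu)
          exact ⟨⟨u, huI⟩, hex ⟨u, huI⟩ hu, rfl⟩
        exact hle
      have hclosed : IsClosed ((L.carrier.map Ic.carrier.subtype : Submodule ℂ B) : Set B) := by
        have h1 : ((L.carrier.map Ic.carrier.subtype : Submodule ℂ B) : Set B)
            = Subtype.val '' (L.carrier : Set Ic.carrier) := rfl
        rw [h1]
        exact Ic.isClosed.isClosedEmbedding_subtypeVal.isClosedMap _ L.isClosed
      rw [Submodule.eq_top_iff']
      intro y
      have hy : (y : B) ∈ closure (N : Set B) := by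
        have hle2 : Ic.carrier ≤ N.topologicalClosure := le_of_eq hIcar
        have h2 := hle2 y.2
        rw [← Submodule.topologicalClosure_coe]
        exact h2
      have hy2 := closure_minimal hsub hclosed hy
      obtain ⟨l, hl, hly⟩ := hy2
      have hly' : l = y := Subtype.ext hly
      rwa [← hly']
  have hIbot := hbot Ic hyp
  have hq0 : q ∈ (⊥ : Submodule ℂ B) := hIbot ▸ hqI
  simpa using hq0

end Part2
/-- the quotient of a Banach algebra by its largest hypocompact
ideal has no nonzero hypocompact closed ideals and no nonzero compact
elements. -/
theorem quotient_largest_hypocompact {A : Type*} [NonUnitalNormedRing A]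
    [NormedSpace ℂ A] [SMulCommClass ℂ A A] [IsScalarTower ℂ A A] [CompleteSpace A]
    (R : ClosedIdeal A)
    (hR : IsHypocompact R.carrier ∧
      ∀ I : ClosedIdeal A, IsHypocompact I.carrier → I.carrier ≤ R.carrier) :
    (∀ I : ClosedIdeal (A ⧸ R.carrier), IsHypocompact I.carrier → I.carrier = ⊥) ∧
    (∀ q : A ⧸ R.carrier, IsCompactElement' q → q = 0) := by
  constructor
  · exact fun I hI => hypocompact_ideal_eq_bot R hR.1 hR.2 I hI
  · intro q hq
    exact compact_eq_zero_of_no_hypocompact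
      (fun I hI => hypocompact_ideal_eq_bot R hR.1 hR.2 I hI) q hq
end
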